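/- Let X and Z be independent random variables (X ∈ ℝ^d, Z ∈ ℝ^q), ε a random variable such that (X, ε) is independent of Z, and τ ∈ (0,1) with P(ε ≤ 0 | X) = τ almost surely. Define, for measurable sets Θ₁, Θ₂ ⊆ ℝ^d and y, z ∈ ℝ^q, W_{Θ,z} := (1{ε ≤ 0} − τ)·1{X ∈ Θ}·(1{Z ≤ z} − F_Z(z)), where F_Z is the distribution function of Z and Z ≤ z is coordinatewise. Then Cov(W_{Θ₁,y}, W_{Θ₂,z}) = τ(1−τ) · P(X ∈ Θ₁ ∩ Θ₂) · (F_Z(y ∧ z) − F_Z(y)F_Z(z)), where y ∧ z denotes the coordinatewise minimum. -/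

import Mathlib

open MeasureTheory Set

section AuxStmt14

variable {Ω : Type*} [MeasurableSpace Ω] (μ : Measure Ω) [IsProbabilityMeasure μ]

lemma stmt14_aux_integrable (c : ℝ) {S : Set Ω} (hS : MeasurableSet S) :
    Integrable (fun ω => c * S.indicator (fun _ => (1:ℝ)) ω) μ :=
  ((integrable_const (1:ℝ)).indicator hS).const_mul c

lemma stmt14_aux_int (c : ℝ) {S : Set Ω} (hS : MeasurableSet S) :
    ∫ ω, c * S.indicator (fun _ => (1:ℝ)) ω ∂μ = c * (μ S).toReal := by
  rw [integral_const_mul, show (fun _ : Ω => (1:ℝ)) = (1 : Ω → ℝ) from rfl,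
    integral_indicator_one hS, measureReal_def]

lemma stmt14_aux_int4 (c1 c2 c3 c4 : ℝ) {S1 S2 S3 S4 : Set Ω}
    (h1 : MeasurableSet S1) (h2 : MeasurableSet S2) (h3 : MeasurableSet S3)
    (h4 : MeasurableSet S4) :
    ∫ ω, (c1 * S1.indicator (fun _ => (1:ℝ)) ω + c2 * S2.indicator (fun _ => (1:ℝ)) ω
        + c3 * S3.indicator (fun _ => (1:ℝ)) ω + c4 * S4.indicator (fun _ => (1:ℝ)) ω) ∂μ
      = c1 * (μ S1).toReal + c2 * (μ S2).toReal + c3 * (μ S3).toReal + c4 * (μ S4).toReal := by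
  have i1 := stmt14_aux_integrable μ c1 h1
  have i2 := stmt14_aux_integrable μ c2 h2
  have i3 := stmt14_aux_integrable μ c3 h3
  have i4 := stmt14_aux_integrable μ c4 h4
  calc ∫ ω, (c1 * S1.indicator (fun _ => (1:ℝ)) ω + c2 * S2.indicator (fun _ => (1:ℝ)) ω
        + c3 * S3.indicator (fun _ => (1:ℝ)) ω + c4 * S4.indicator (fun _ => (1:ℝ)) ω) ∂μ
      = (∫ ω, (c1 * S1.indicator (fun _ => (1:ℝ)) ω + c2 * S2.indicator (fun _ => (1:ℝ)) ω
          + c3 * S3.indicator (fun _ => (1:ℝ)) ω) ∂μ)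
        + ∫ ω, c4 * S4.indicator (fun _ => (1:ℝ)) ω ∂μ :=
      integral_add ((i1.add i2).add i3) i4
    _ = ((∫ ω, (c1 * S1.indicator (fun _ => (1:ℝ)) ω + c2 * S2.indicator (fun _ => (1:ℝ)) ω) ∂μ)
          + ∫ ω, c3 * S3.indicator (fun _ => (1:ℝ)) ω ∂μ)
        + ∫ ω, c4 * S4.indicator (fun _ => (1:ℝ)) ω ∂μ := by
      congr 1
      exact integral_add (i1.add i2) i3
    _ = (((∫ ω, c1 * S1.indicator (fun _ => (1:ℝ)) ω ∂μ)
          + ∫ ω, c2 * S2.indicator (fun _ => (1:ℝ)) ω ∂μ)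
          + ∫ ω, c3 * S3.indicator (fun _ => (1:ℝ)) ω ∂μ)
        + ∫ ω, c4 * S4.indicator (fun _ => (1:ℝ)) ω ∂μ := by
      congr 1
      congr 1
      exact integral_add i1 i2
    _ = c1 * (μ S1).toReal + c2 * (μ S2).toReal + c3 * (μ S3).toReal + c4 * (μ S4).toReal := by
      rw [stmt14_aux_int μ c1 h1, stmt14_aux_int μ c2 h2, stmt14_aux_int μ c3 h3,
        stmt14_aux_int μ c4 h4]

lemma stmt14_aux_int8 (c1 c2 c3 c4 c5 c6 c7 c8 : ℝ) {S1 S2 S3 S4 S5 S6 S7 S8 : Set Ω}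
    (h1 : MeasurableSet S1) (h2 : MeasurableSet S2) (h3 : MeasurableSet S3)
    (h4 : MeasurableSet S4) (h5 : MeasurableSet S5) (h6 : MeasurableSet S6)
    (h7 : MeasurableSet S7) (h8 : MeasurableSet S8) :
    ∫ ω, ((c1 * S1.indicator (fun _ => (1:ℝ)) ω + c2 * S2.indicator (fun _ => (1:ℝ)) ω
        + c3 * S3.indicator (fun _ => (1:ℝ)) ω + c4 * S4.indicator (fun _ => (1:ℝ)) ω)
        + (c5 * S5.indicator (fun _ => (1:ℝ)) ω + c6 * S6.indicator (fun _ => (1:ℝ)) ω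
        + c7 * S7.indicator (fun _ => (1:ℝ)) ω + c8 * S8.indicator (fun _ => (1:ℝ)) ω)) ∂μ
      = (c1 * (μ S1).toReal + c2 * (μ S2).toReal + c3 * (μ S3).toReal + c4 * (μ S4).toReal)
        + (c5 * (μ S5).toReal + c6 * (μ S6).toReal + c7 * (μ S7).toReal + c8 * (μ S8).toReal) := by
  have i1 := stmt14_aux_integrable μ c1 h1
  have i2 := stmt14_aux_integrable μ c2 h2
  have i3 := stmt14_aux_integrable μ c3 h3
  have i4 := stmt14_aux_integrable μ c4 h4
  have i5 := stmt14_aux_integrable μ c5 h5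
  have i6 := stmt14_aux_integrable μ c6 h6
  have i7 := stmt14_aux_integrable μ c7 h7
  have i8 := stmt14_aux_integrable μ c8 h8
  calc ∫ ω, ((c1 * S1.indicator (fun _ => (1:ℝ)) ω + c2 * S2.indicator (fun _ => (1:ℝ)) ω
        + c3 * S3.indicator (fun _ => (1:ℝ)) ω + c4 * S4.indicator (fun _ => (1:ℝ)) ω)
        + (c5 * S5.indicator (fun _ => (1:ℝ)) ω + c6 * S6.indicator (fun _ => (1:ℝ)) ω
        + c7 * S7.indicator (fun _ => (1:ℝ)) ω + c8 * S8.indicator (fun _ => (1:ℝ)) ω)) ∂μ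
      = (∫ ω, (c1 * S1.indicator (fun _ => (1:ℝ)) ω + c2 * S2.indicator (fun _ => (1:ℝ)) ω
          + c3 * S3.indicator (fun _ => (1:ℝ)) ω + c4 * S4.indicator (fun _ => (1:ℝ)) ω) ∂μ)
        + ∫ ω, (c5 * S5.indicator (fun _ => (1:ℝ)) ω + c6 * S6.indicator (fun _ => (1:ℝ)) ω
          + c7 * S7.indicator (fun _ => (1:ℝ)) ω + c8 * S8.indicator (fun _ => (1:ℝ)) ω) ∂μ :=
      integral_add (((i1.add i2).add i3).add i4) (((i5.add i6).add i7).add i8)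
    _ = (c1 * (μ S1).toReal + c2 * (μ S2).toReal + c3 * (μ S3).toReal + c4 * (μ S4).toReal)
        + (c5 * (μ S5).toReal + c6 * (μ S6).toReal + c7 * (μ S7).toReal + c8 * (μ S8).toReal) := by
      rw [stmt14_aux_int4 μ c1 c2 c3 c4 h1 h2 h3 h4, stmt14_aux_int4 μ c5 c6 c7 c8 h5 h6 h7 h8]

end AuxStmt14

/-- The distribution function `F_Z(z) = P(Z ≤ z)` (coordinatewise inequality). -/
noncomputable def FZ {Ωs : Type*} [MeasurableSpace Ωs] (μ : Measure Ωs) {q : ℕ}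
    (Z : Ωs → Fin q → ℝ) (z : Fin q → ℝ) : ℝ :=
  (μ {ω | Z ω ≤ z}).toReal

/-- The random variable `W_{Θ,z} = (1{ε ≤ 0} − τ)·1{X ∈ Θ}·(1{Z ≤ z} − F_Z(z))`. -/
noncomputable def Wfun {Ωs : Type*} [MeasurableSpace Ωs] (μ : Measure Ωs) {d q : ℕ}
    (X : Ωs → Fin d → ℝ) (Z : Ωs → Fin q → ℝ) (e : Ωs → ℝ) (τ : ℝ)
    (Θ : Set (Fin d → ℝ)) (z : Fin q → ℝ) (ω : Ωs) : ℝ :=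
  ({ω' | e ω' ≤ 0}.indicator (fun _ => (1:ℝ)) ω - τ) *
    ((X ⁻¹' Θ).indicator (fun _ => (1:ℝ)) ω) *
    ({ω' | Z ω' ≤ z}.indicator (fun _ => (1:ℝ)) ω - FZ μ Z z)

theorem stmt14 {Ωs : Type*} [MeasurableSpace Ωs] (μ : Measure Ωs) [IsProbabilityMeasure μ]
    (d q : ℕ) (X : Ωs → Fin d → ℝ) (Z : Ωs → Fin q → ℝ) (e : Ωs → ℝ) (τ : ℝ)
    (hτ : τ ∈ Set.Ioo (0:ℝ) 1)
    (hX : Measurable X) (hZ : Measurable Z) (he : Measurable e)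
    (hindep : ProbabilityTheory.IndepFun (fun ω => (X ω, e ω)) Z μ)
    (hcond : ∀ Θ : Set (Fin d → ℝ), MeasurableSet Θ →
      μ ({ω | e ω ≤ 0} ∩ X ⁻¹' Θ) = ENNReal.ofReal τ * μ (X ⁻¹' Θ))
    (Θ₁ Θ₂ : Set (Fin d → ℝ)) (hΘ₁ : MeasurableSet Θ₁) (hΘ₂ : MeasurableSet Θ₂)
    (y z : Fin q → ℝ) :
    (∫ ω, Wfun μ X Z e τ Θ₁ y ω * Wfun μ X Z e τ Θ₂ z ω ∂μ) -
        (∫ ω, Wfun μ X Z e τ Θ₁ y ω ∂μ) * (∫ ω, Wfun μ X Z e τ Θ₂ z ω ∂μ) =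
      τ * (1 - τ) * (μ (X ⁻¹' (Θ₁ ∩ Θ₂))).toReal *
        (FZ μ Z (y ⊓ z) - FZ μ Z y * FZ μ Z z) := by
  obtain ⟨hτ0, hτ1⟩ := hτ
  have hA : MeasurableSet {ω | e ω ≤ 0} := measurableSet_le he measurable_const
  have hC : ∀ w : Fin q → ℝ, MeasurableSet {ω | Z ω ≤ w} := fun w =>
    hZ (measurableSet_Iic : MeasurableSet (Set.Iic w))
  -- indicator algebra
  have hmul : ∀ (S T : Set Ωs) (ω : Ωs),
      (S ∩ T).indicator (fun _ => (1:ℝ)) ω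
        = S.indicator (fun _ => (1:ℝ)) ω * T.indicator (fun _ => (1:ℝ)) ω := by
    intro S T ω
    by_cases hS : ω ∈ S <;> by_cases hT : ω ∈ T <;>
      simp [Set.indicator_apply, Set.mem_inter_iff, hS, hT]
  have hsq : ∀ (S : Set Ωs) (ω : Ωs),
      S.indicator (fun _ => (1:ℝ)) ω * S.indicator (fun _ => (1:ℝ)) ω
        = S.indicator (fun _ => (1:ℝ)) ω := by
    intro S ω
    by_cases hS : ω ∈ S <;> simp [Set.indicator_apply, hS]
  have hpre : X ⁻¹' (Θ₁ ∩ Θ₂) = X ⁻¹' Θ₁ ∩ X ⁻¹' Θ₂ := Set.preimage_inter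
  have hcap : {ω' | Z ω' ≤ y ⊓ z} = {ω' | Z ω' ≤ y} ∩ {ω' | Z ω' ≤ z} := by
    ext ω; simp [Set.mem_inter_iff, Set.mem_setOf_eq, le_inf_iff]
  -- independence in measure form
  have key : ∀ (S : Set ((Fin d → ℝ) × ℝ)), MeasurableSet S → ∀ w : Fin q → ℝ,
      μ ((fun ω => (X ω, e ω)) ⁻¹' S ∩ {ω | Z ω ≤ w})
        = μ ((fun ω => (X ω, e ω)) ⁻¹' S) * μ {ω | Z ω ≤ w} := fun S hS w =>
    hindep.measure_inter_preimage_eq_mul S (Set.Iic w) hS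
      (measurableSet_Iic : MeasurableSet (Set.Iic w))
  -- measure computations in toReal form
  have hAB : ∀ (Θ : Set (Fin d → ℝ)), MeasurableSet Θ →
      (μ ({ω | e ω ≤ 0} ∩ X ⁻¹' Θ)).toReal = τ * (μ (X ⁻¹' Θ)).toReal := by
    intro Θ hΘ
    rw [hcond Θ hΘ, ENNReal.toReal_mul, ENNReal.toReal_ofReal hτ0.le]
  have hprod : ∀ (Θ : Set (Fin d → ℝ)), MeasurableSet Θ → ∀ w : Fin q → ℝ,
      (μ (X ⁻¹' Θ ∩ {ω | Z ω ≤ w})).toReal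
        = (μ (X ⁻¹' Θ)).toReal * (μ {ω | Z ω ≤ w}).toReal := by
    intro Θ hΘ w
    have hset : X ⁻¹' Θ = (fun ω => (X ω, e ω)) ⁻¹' (Θ ×ˢ (Set.univ : Set ℝ)) := by
      ext ω; simp
    rw [hset, key _ (hΘ.prod MeasurableSet.univ) w, ENNReal.toReal_mul, ← hset]
  have hABC : ∀ (Θ : Set (Fin d → ℝ)), MeasurableSet Θ → ∀ w : Fin q → ℝ,
      (μ ({ω | e ω ≤ 0} ∩ X ⁻¹' Θ ∩ {ω | Z ω ≤ w})).toReal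
        = τ * (μ (X ⁻¹' Θ)).toReal * (μ {ω | Z ω ≤ w}).toReal := by
    intro Θ hΘ w
    have hset : {ω | e ω ≤ 0} ∩ X ⁻¹' Θ
        = (fun ω => (X ω, e ω)) ⁻¹' (Θ ×ˢ (Set.Iic (0:ℝ))) := by
      ext ω
      simp only [Set.mem_inter_iff, Set.mem_setOf_eq, Set.mem_preimage, Set.mem_prod,
        Set.mem_Iic]
      tauto
    rw [hset, key _ (hΘ.prod measurableSet_Iic) w, ← hset, ENNReal.toReal_mul, hAB Θ hΘ,
      mul_assoc]
  -- pointwise expansion of a single W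
  have hWpt : ∀ (Θ : Set (Fin d → ℝ)) (w : Fin q → ℝ) (ω : Ωs),
      Wfun μ X Z e τ Θ w ω =
        1 * ({ω' | e ω' ≤ 0} ∩ X ⁻¹' Θ ∩ {ω' | Z ω' ≤ w}).indicator (fun _ => (1:ℝ)) ω
        + (-(FZ μ Z w)) * ({ω' | e ω' ≤ 0} ∩ X ⁻¹' Θ).indicator (fun _ => (1:ℝ)) ω
        + (-τ) * ((X ⁻¹' Θ ∩ {ω' | Z ω' ≤ w}).indicator (fun _ => (1:ℝ)) ω)
        + (τ * FZ μ Z w) * ((X ⁻¹' Θ).indicator (fun _ => (1:ℝ)) ω) := by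
    intro Θ w ω
    simp only [Wfun, hmul]
    ring
  -- pointwise expansion of the product
  have hWWpt : ∀ ω : Ωs,
      Wfun μ X Z e τ Θ₁ y ω * Wfun μ X Z e τ Θ₂ z ω =
        ((1 - 2*τ) * ({ω' | e ω' ≤ 0} ∩ X ⁻¹' (Θ₁ ∩ Θ₂) ∩ {ω' | Z ω' ≤ y ⊓ z}).indicator
            (fun _ => (1:ℝ)) ω
        + (-((1 - 2*τ) * FZ μ Z z)) *
            (({ω' | e ω' ≤ 0} ∩ X ⁻¹' (Θ₁ ∩ Θ₂) ∩ {ω' | Z ω' ≤ y}).indicator (fun _ => (1:ℝ)) ω)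
        + (-((1 - 2*τ) * FZ μ Z y)) *
            (({ω' | e ω' ≤ 0} ∩ X ⁻¹' (Θ₁ ∩ Θ₂) ∩ {ω' | Z ω' ≤ z}).indicator (fun _ => (1:ℝ)) ω)
        + ((1 - 2*τ) * FZ μ Z y * FZ μ Z z) *
            (({ω' | e ω' ≤ 0} ∩ X ⁻¹' (Θ₁ ∩ Θ₂)).indicator (fun _ => (1:ℝ)) ω))
        + ((τ^2) * ((X ⁻¹' (Θ₁ ∩ Θ₂) ∩ {ω' | Z ω' ≤ y ⊓ z}).indicator (fun _ => (1:ℝ)) ω)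
        + (-(τ^2 * FZ μ Z z)) * ((X ⁻¹' (Θ₁ ∩ Θ₂) ∩ {ω' | Z ω' ≤ y}).indicator (fun _ => (1:ℝ)) ω)
        + (-(τ^2 * FZ μ Z y)) * ((X ⁻¹' (Θ₁ ∩ Θ₂) ∩ {ω' | Z ω' ≤ z}).indicator (fun _ => (1:ℝ)) ω)
        + (τ^2 * FZ μ Z y * FZ μ Z z) * ((X ⁻¹' (Θ₁ ∩ Θ₂)).indicator (fun _ => (1:ℝ)) ω)) := by
    intro ω
    simp only [Wfun, hpre, hcap, hmul]
    linear_combination (((X ⁻¹' Θ₁).indicator (fun _ => (1:ℝ)) ω)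
        * ((X ⁻¹' Θ₂).indicator (fun _ => (1:ℝ)) ω)
        * (({ω' | Z ω' ≤ y}.indicator (fun _ => (1:ℝ)) ω) - FZ μ Z y)
        * (({ω' | Z ω' ≤ z}.indicator (fun _ => (1:ℝ)) ω) - FZ μ Z z))
      * hsq {ω' | e ω' ≤ 0} ω
  -- compute the three integrals
  have hBm : ∀ {Θ : Set (Fin d → ℝ)}, MeasurableSet Θ → MeasurableSet (X ⁻¹' Θ) :=
    fun h => hX h
  have hI1 : ∫ ω, Wfun μ X Z e τ Θ₁ y ω ∂μ =
      1 * (μ ({ω | e ω ≤ 0} ∩ X ⁻¹' Θ₁ ∩ {ω | Z ω ≤ y})).toReal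
      + (-(FZ μ Z y)) * (μ ({ω | e ω ≤ 0} ∩ X ⁻¹' Θ₁)).toReal
      + (-τ) * (μ (X ⁻¹' Θ₁ ∩ {ω | Z ω ≤ y})).toReal
      + (τ * FZ μ Z y) * (μ (X ⁻¹' Θ₁)).toReal := by
    rw [show (fun ω => Wfun μ X Z e τ Θ₁ y ω) = _ from funext (hWpt Θ₁ y)]
    exact stmt14_aux_int4 μ _ _ _ _ ((hA.inter (hBm hΘ₁)).inter (hC y)) (hA.inter (hBm hΘ₁))
      ((hBm hΘ₁).inter (hC y)) (hBm hΘ₁)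
  have hI2 : ∫ ω, Wfun μ X Z e τ Θ₂ z ω ∂μ =
      1 * (μ ({ω | e ω ≤ 0} ∩ X ⁻¹' Θ₂ ∩ {ω | Z ω ≤ z})).toReal
      + (-(FZ μ Z z)) * (μ ({ω | e ω ≤ 0} ∩ X ⁻¹' Θ₂)).toReal
      + (-τ) * (μ (X ⁻¹' Θ₂ ∩ {ω | Z ω ≤ z})).toReal
      + (τ * FZ μ Z z) * (μ (X ⁻¹' Θ₂)).toReal := by
    rw [show (fun ω => Wfun μ X Z e τ Θ₂ z ω) = _ from funext (hWpt Θ₂ z)]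
    exact stmt14_aux_int4 μ _ _ _ _ ((hA.inter (hBm hΘ₂)).inter (hC z)) (hA.inter (hBm hΘ₂))
      ((hBm hΘ₂).inter (hC z)) (hBm hΘ₂)
  have hΘ12 : MeasurableSet (Θ₁ ∩ Θ₂) := hΘ₁.inter hΘ₂
  have hI12 : ∫ ω, Wfun μ X Z e τ Θ₁ y ω * Wfun μ X Z e τ Θ₂ z ω ∂μ =
      ((1 - 2*τ) * (μ ({ω | e ω ≤ 0} ∩ X ⁻¹' (Θ₁ ∩ Θ₂) ∩ {ω | Z ω ≤ y ⊓ z})).toReal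
      + (-((1 - 2*τ) * FZ μ Z z)) * (μ ({ω | e ω ≤ 0} ∩ X ⁻¹' (Θ₁ ∩ Θ₂) ∩ {ω | Z ω ≤ y})).toReal
      + (-((1 - 2*τ) * FZ μ Z y)) * (μ ({ω | e ω ≤ 0} ∩ X ⁻¹' (Θ₁ ∩ Θ₂) ∩ {ω | Z ω ≤ z})).toReal
      + ((1 - 2*τ) * FZ μ Z y * FZ μ Z z) * (μ ({ω | e ω ≤ 0} ∩ X ⁻¹' (Θ₁ ∩ Θ₂))).toReal)
      + ((τ^2) * (μ (X ⁻¹' (Θ₁ ∩ Θ₂) ∩ {ω | Z ω ≤ y ⊓ z})).toReal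
      + (-(τ^2 * FZ μ Z z)) * (μ (X ⁻¹' (Θ₁ ∩ Θ₂) ∩ {ω | Z ω ≤ y})).toReal
      + (-(τ^2 * FZ μ Z y)) * (μ (X ⁻¹' (Θ₁ ∩ Θ₂) ∩ {ω | Z ω ≤ z})).toReal
      + (τ^2 * FZ μ Z y * FZ μ Z z) * (μ (X ⁻¹' (Θ₁ ∩ Θ₂))).toReal) := by
    rw [show (fun ω => Wfun μ X Z e τ Θ₁ y ω * Wfun μ X Z e τ Θ₂ z ω) = _ from funext hWWpt]
    exact stmt14_aux_int8 μ _ _ _ _ _ _ _ _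
      ((hA.inter (hBm hΘ12)).inter (hC (y ⊓ z))) ((hA.inter (hBm hΘ12)).inter (hC y))
      ((hA.inter (hBm hΘ12)).inter (hC z)) (hA.inter (hBm hΘ12))
      ((hBm hΘ12).inter (hC (y ⊓ z))) ((hBm hΘ12).inter (hC y))
      ((hBm hΘ12).inter (hC z)) (hBm hΘ12)
  have hFZ : ∀ w : Fin q → ℝ, (μ {ω | Z ω ≤ w}).toReal = FZ μ Z w := fun _ => rfl
  rw [hI1, hI2, hI12, hABC Θ₁ hΘ₁ y, hABC Θ₂ hΘ₂ z, hABC (Θ₁ ∩ Θ₂) hΘ12 (y ⊓ z),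
    hABC (Θ₁ ∩ Θ₂) hΘ12 y, hABC (Θ₁ ∩ Θ₂) hΘ12 z, hAB Θ₁ hΘ₁, hAB Θ₂ hΘ₂, hAB (Θ₁ ∩ Θ₂) hΘ12,
    hprod Θ₁ hΘ₁ y, hprod Θ₂ hΘ₂ z, hprod (Θ₁ ∩ Θ₂) hΘ12 (y ⊓ z), hprod (Θ₁ ∩ Θ₂) hΘ12 y,
    hprod (Θ₁ ∩ Θ₂) hΘ12 z, hFZ y, hFZ z, hFZ (y ⊓ z)]
  ring
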